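/- arXiv:2203.03607 — 3 statements merged into one kernel-verified Lean document; each statement's English description precedes it below -/
import Mathlib

section
/- Let p_s(x) = (2πs)^{−1/2} exp(−x²/(2s)). Fix δ ∈ (0,1) and M > 0. There exists a constant C (one may take C = 2 (1−δ)^{−2} e^{M²}) such that for all t ∈ (0, δ), all y₁ > y₂, and all a₁, a₂ with −M ≤ a₂ < a₁ ≤ M, the following holds: det( p_{1−t}(y_i − a_j) )_{i,j=1}² ≤ C · (y₁ − y₂)(a₁ − a₂) p₁(a₁) p₁(a₂). -/
/-- The standard heat kernel `p_s(x) = (2πs)^{-1/2} exp(-x²/(2s))`. -/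
noncomputable def heatKernel (s x : ℝ) : ℝ :=
    (Real.sqrt (2 * Real.pi * s))⁻¹ * Real.exp (-x ^ 2 / (2 * s))

lemma exp_sub_exp_le_aux {a b : ℝ} (ha : a ≤ 0) (hb : b ≤ a) :
    Real.exp a - Real.exp b ≤ a - b := by
  have h1 : (b - a) + 1 ≤ Real.exp (b - a) := Real.add_one_le_exp _
  have h2 : Real.exp a * Real.exp (b - a) = Real.exp b := by
    rw [← Real.exp_add]; ring_nf
  have h3 : Real.exp a ≤ 1 := Real.exp_le_one_iff.mpr ha
  have h4 : Real.exp a - Real.exp b = Real.exp a * (1 - Real.exp (b - a)) := by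
    rw [mul_sub, mul_one, h2]
  rw [h4]
  have h5 : 1 - Real.exp (b - a) ≤ a - b := by linarith
  have h6 : 0 ≤ a - b := by linarith
  calc Real.exp a * (1 - Real.exp (b - a)) ≤ Real.exp a * (a - b) :=
        mul_le_mul_of_nonneg_left h5 (Real.exp_pos a).le
    _ ≤ 1 * (a - b) := mul_le_mul_of_nonneg_right h3 h6
    _ = a - b := one_mul _

lemma hk_mul (s x y : ℝ) (hs : 0 < s) :
    heatKernel s x * heatKernel s y
      = (2 * Real.pi * s)⁻¹ * Real.exp (-(x ^ 2 + y ^ 2) / (2 * s)) := by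
  have hπ := Real.pi_pos
  have hA : (Real.sqrt (2 * Real.pi * s))⁻¹ * (Real.sqrt (2 * Real.pi * s))⁻¹
      = (2 * Real.pi * s)⁻¹ := by
    rw [← mul_inv, Real.mul_self_sqrt (by positivity)]
  unfold heatKernel
  rw [show (Real.sqrt (2 * Real.pi * s))⁻¹ * Real.exp (-x ^ 2 / (2 * s)) *
      ((Real.sqrt (2 * Real.pi * s))⁻¹ * Real.exp (-y ^ 2 / (2 * s)))
      = ((Real.sqrt (2 * Real.pi * s))⁻¹ * (Real.sqrt (2 * Real.pi * s))⁻¹) *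
        (Real.exp (-x ^ 2 / (2 * s)) * Real.exp (-y ^ 2 / (2 * s))) from by ring,
    hA, ← Real.exp_add]
  congr 1
  field_simp
  ring

set_option maxHeartbeats 1000000 in
theorem stmt_10 (δ M : ℝ) (hδ : δ ∈ Set.Ioo (0 : ℝ) 1) (hM : 0 < M) :
    ∃ C : ℝ, C = 2 * (1 - δ) ^ (-(2 : ℝ)) * Real.exp (M ^ 2) ∧
      ∀ t ∈ Set.Ioo (0 : ℝ) δ, ∀ y₁ y₂ a₁ a₂ : ℝ,
        y₂ < y₁ → -M ≤ a₂ → a₂ < a₁ → a₁ ≤ M →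
        heatKernel (1 - t) (y₁ - a₁) * heatKernel (1 - t) (y₂ - a₂)
          - heatKernel (1 - t) (y₁ - a₂) * heatKernel (1 - t) (y₂ - a₁)
        ≤ C * ((y₁ - y₂) * (a₁ - a₂) * heatKernel 1 a₁ * heatKernel 1 a₂) := by
  obtain ⟨hδ0, hδ1⟩ := hδ
  refine ⟨_, rfl, ?_⟩
  rintro t ⟨ht0, htδ⟩ y₁ y₂ a₁ a₂ hy ha2 ha ha1
  have hπ := Real.pi_pos
  set s : ℝ := 1 - t with hs_def
  have hs0 : 0 < s := by simp only [hs_def]; linarith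
  have hsδ : 1 - δ < s := by simp only [hs_def]; linarith
  have hδ' : 0 < 1 - δ := by linarith
  -- rewrite C
  have hC : (2 : ℝ) * (1 - δ) ^ (-(2 : ℝ)) * Real.exp (M ^ 2)
      = 2 * ((1 - δ) ^ 2)⁻¹ * Real.exp (M ^ 2) := by
    rw [show (-(2:ℝ)) = -((2:ℕ):ℝ) by norm_num, Real.rpow_neg hδ'.le, Real.rpow_natCast]
  set u : ℝ := (y₁ - y₂) * (a₁ - a₂) with hu_def
  have hu : 0 < u := mul_pos (by linarith) (by linarith)
  set E₁ : ℝ := -((y₁ - a₁) ^ 2 + (y₂ - a₂) ^ 2) / (2 * s) with hE1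
  set E₂ : ℝ := -((y₁ - a₂) ^ 2 + (y₂ - a₁) ^ 2) / (2 * s) with hE2
  have hE1le : E₁ ≤ 0 := by
    apply div_nonpos_of_nonpos_of_nonneg (neg_nonpos.mpr (by positivity)) (by positivity)
  have hdiff : E₁ - E₂ = u / s := by
    rw [hE1, hE2, hu_def]; field_simp; ring
  have hE2le : E₂ ≤ E₁ := by
    have : 0 < u / s := div_pos hu hs0
    linarith [hdiff]
  -- LHS rewrite
  rw [hk_mul s _ _ hs0, hk_mul s _ _ hs0, mul_assoc u (heatKernel 1 a₁) (heatKernel 1 a₂),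
    hk_mul 1 _ _ one_pos]
  rw [← hE1, ← hE2]
  clear_value s u E₁ E₂
  clear hs_def hu_def hE1 hE2
  have key : Real.exp E₁ - Real.exp E₂ ≤ u / s := by
    calc Real.exp E₁ - Real.exp E₂ ≤ E₁ - E₂ := exp_sub_exp_le_aux hE1le hE2le
      _ = u / s := hdiff
  have hA : (0:ℝ) < (2 * Real.pi * s)⁻¹ := by positivity
  have step1 : (2 * Real.pi * s)⁻¹ * Real.exp E₁ - (2 * Real.pi * s)⁻¹ * Real.exp E₂
      ≤ (2 * Real.pi * s)⁻¹ * (u / s) := by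
    rw [← mul_sub]
    exact mul_le_mul_of_nonneg_left key hA.le
  refine step1.trans ?_
  rw [hC]
  -- remains: (2πs)⁻¹ * (u/s) ≤ 2 ((1-δ)²)⁻¹ e^{M²} * (u * ((2π·1)⁻¹ e^{-(a₁²+a₂²)/2}))
  have hexp1 : (1:ℝ) ≤ Real.exp (M ^ 2) * Real.exp (-(a₁ ^ 2 + a₂ ^ 2) / (2 * 1)) := by
    rw [← Real.exp_add]
    apply Real.one_le_exp
    have h1 : a₁ ^ 2 ≤ M ^ 2 := by nlinarith
    have h2 : a₂ ^ 2 ≤ M ^ 2 := by nlinarith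
    nlinarith
  have hss : ((1 - δ) ^ 2)⁻¹ ≥ (s ^ 2)⁻¹ := by
    apply inv_anti₀ (by positivity)
    nlinarith
  have lhs_eq : (2 * Real.pi * s)⁻¹ * (u / s) = u * (2 * Real.pi)⁻¹ * (s ^ 2)⁻¹ := by
    field_simp
  rw [lhs_eq]
  have rhs_eq : 2 * ((1 - δ) ^ 2)⁻¹ * Real.exp (M ^ 2) *
      (u * ((2 * Real.pi * 1)⁻¹ * Real.exp (-(a₁ ^ 2 + a₂ ^ 2) / (2 * 1))))
      = u * (2 * Real.pi)⁻¹ * (2 * ((1 - δ) ^ 2)⁻¹ *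
        (Real.exp (M ^ 2) * Real.exp (-(a₁ ^ 2 + a₂ ^ 2) / (2 * 1)))) := by
    ring_nf
  rw [rhs_eq]
  apply mul_le_mul_of_nonneg_left _ (by positivity)
  calc (s ^ 2)⁻¹ ≤ ((1 - δ) ^ 2)⁻¹ := hss
    _ = ((1 - δ) ^ 2)⁻¹ * 1 := by ring
    _ ≤ ((1 - δ) ^ 2)⁻¹ * (2 * (Real.exp (M ^ 2) * Real.exp (-(a₁ ^ 2 + a₂ ^ 2) / (2 * 1)))) := by
        apply mul_le_mul_of_nonneg_left _ (by positivity)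
        nlinarith
    _ = 2 * ((1 - δ) ^ 2)⁻¹ * (Real.exp (M ^ 2) * Real.exp (-(a₁ ^ 2 + a₂ ^ 2) / (2 * 1))) := by
        ring
end

section
/- Let p_t(x) = (2πt)^{−1/2} exp(−x²/(2t)). For fixed t > 0 and x₁ > x₂, ∫∫_{y₁ > y₂} (y₁ − y₂) · det( p_t(x_i − y_j) )_{i,j=1}² dy₁ dy₂ = x₁ − x₂. -/
open MeasureTheory Real ProbabilityTheory
open scoped NNReal

lemma integral_mul_exp_neg_mul_sq_eq_zero {b : ℝ} : ∫ x : ℝ, x * Real.exp (-b * x ^ 2) = 0 := by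
  have h : ∫ x : ℝ, x * Real.exp (-b * x ^ 2) = - ∫ x : ℝ, x * Real.exp (-b * x ^ 2) := by
    conv_lhs => rw [← MeasureTheory.integral_neg_eq_self
      (fun x : ℝ => x * Real.exp (-b * x ^ 2)) volume]
    rw [← integral_neg]
    congr 1; funext x; rw [neg_sq]; ring
  linarith

lemma gauss_shift (μ : ℝ) (v : ℝ≥0) (z : ℝ) :
    gaussianPDFReal μ v (z + μ) = gaussianPDFReal 0 v z := by
  rw [gaussianPDFReal_add]; simp

lemma gauss_zero_eq (v : ℝ≥0) (z : ℝ) :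
    gaussianPDFReal 0 v z = (√(2 * π * v))⁻¹ * Real.exp (-(2 * (v:ℝ))⁻¹ * z ^ 2) := by
  rw [gaussianPDFReal]
  congr 1
  rw [sub_zero]
  congr 1
  field_simp

lemma integrable_id_mul_gauss_zero (v : ℝ≥0) (hv : 0 < (v : ℝ)) :
    Integrable fun z : ℝ => z * gaussianPDFReal 0 v z := by
  have hb : 0 < (2 * (v:ℝ))⁻¹ := by positivity
  have := ((integrable_mul_exp_neg_mul_sq hb).const_mul (√(2 * π * v))⁻¹)
  refine this.congr ?_
  filter_upwards with z
  rw [gauss_zero_eq]; ring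

lemma integral_id_mul_gauss_zero (v : ℝ≥0) :
    ∫ z : ℝ, z * gaussianPDFReal 0 v z = 0 := by
  simp_rw [gauss_zero_eq]
  rw [show (fun z : ℝ => z * ((√(2 * π * v))⁻¹ * Real.exp (-(2 * (v:ℝ))⁻¹ * z ^ 2)))
      = (fun z : ℝ => (√(2 * π * v))⁻¹ * (z * Real.exp (-(2 * (v:ℝ))⁻¹ * z ^ 2))) by
    funext z; ring]
  rw [integral_const_mul, integral_mul_exp_neg_mul_sq_eq_zero, mul_zero]

lemma integrable_id_mul_gauss (μ : ℝ) (v : ℝ≥0) (hv : 0 < (v : ℝ)) :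
    Integrable fun y : ℝ => y * gaussianPDFReal μ v y := by
  have h : Integrable fun z : ℝ => (z + μ) * gaussianPDFReal μ v (z + μ) := by
    simp_rw [gauss_shift]
    have h1 := integrable_id_mul_gauss_zero v hv
    have h2 := (integrable_gaussianPDFReal 0 v).const_mul μ
    refine (h1.add h2).congr ?_
    filter_upwards with z; simp only [Pi.add_apply]; ring
  have := h.comp_sub_right μ
  refine this.congr ?_
  filter_upwards with y
  simp

lemma integral_id_mul_gauss (μ : ℝ) (v : ℝ≥0) (hv : v ≠ 0) :
    ∫ y : ℝ, y * gaussianPDFReal μ v y = μ := by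
  have hv' : 0 < (v : ℝ) := by positivity
  rw [← integral_add_right_eq_self (fun y : ℝ => y * gaussianPDFReal μ v y) μ]
  simp_rw [gauss_shift]
  have : (fun z : ℝ => (z + μ) * gaussianPDFReal 0 v z)
      = fun z : ℝ => z * gaussianPDFReal 0 v z + μ * gaussianPDFReal 0 v z := by
    funext z; ring
  rw [this, integral_add (integrable_id_mul_gauss_zero v hv')
    ((integrable_gaussianPDFReal 0 v).const_mul μ),
    integral_id_mul_gauss_zero, integral_const_mul, integral_gaussianPDFReal_eq_one 0 hv,
    zero_add, mul_one]

theorem stmt_11 (t x₁ x₂ : ℝ) (ht : 0 < t) (hx : x₂ < x₁) :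
    ∫ y in {q : ℝ × ℝ | q.2 < q.1},
        (y.1 - y.2) * (heatKernel t (x₁ - y.1) * heatKernel t (x₂ - y.2)
          - heatKernel t (x₁ - y.2) * heatKernel t (x₂ - y.1))
      = x₁ - x₂ := by
  set v : ℝ≥0 := ⟨t, ht.le⟩ with hvdef
  have hv : v ≠ 0 := by
    simp only [hvdef, ne_eq, ← NNReal.coe_eq_zero]
    intro h; apply ht.ne'; exact congrArg NNReal.toReal h
  have hv' : 0 < (v : ℝ) := ht
  have hk : ∀ x y : ℝ, heatKernel t (x - y) = gaussianPDFReal x v y := by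
    intro x y
    simp only [heatKernel, gaussianPDFReal, hvdef, NNReal.coe_mk]
    ring_nf
    rfl
  simp only [hk]
  set g₁ : ℝ → ℝ := gaussianPDFReal x₁ v with hg₁
  set g₂ : ℝ → ℝ := gaussianPDFReal x₂ v with hg₂
  set m₁ : ℝ → ℝ := fun z => z * g₁ z with hm₁
  set m₂ : ℝ → ℝ := fun z => z * g₂ z with hm₂
  have Hg₁ : Integrable g₁ := integrable_gaussianPDFReal x₁ v
  have Hg₂ : Integrable g₂ := integrable_gaussianPDFReal x₂ v
  have Hm₁ : Integrable m₁ := integrable_id_mul_gauss x₁ v hv'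
  have Hm₂ : Integrable m₂ := integrable_id_mul_gauss x₂ v hv'
  have key : ∀ u w : ℝ → ℝ, Integrable u → Integrable w →
      Integrable (fun y : ℝ × ℝ => u y.1 * w y.2) ∧
        (∫ y : ℝ × ℝ, u y.1 * w y.2) = (∫ z, u z) * ∫ z, w z := by
    intro u w hu hw
    constructor
    · rw [Measure.volume_eq_prod]; exact hu.mul_prod hw
    · rw [Measure.volume_eq_prod]; exact integral_prod_mul u w
  obtain ⟨h₁, i₁⟩ := key m₁ g₂ Hm₁ Hg₂
  obtain ⟨h₂, i₂⟩ := key g₁ m₂ Hg₁ Hm₂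
  obtain ⟨h₃, i₃⟩ := key m₂ g₁ Hm₂ Hg₁
  obtain ⟨h₄, i₄⟩ := key g₂ m₁ Hg₂ Hm₁
  set f : ℝ × ℝ → ℝ :=
    fun y => (y.1 - y.2) * (g₁ y.1 * g₂ y.2 - g₁ y.2 * g₂ y.1) with hf
  have hfeq : f = fun y : ℝ × ℝ =>
      m₁ y.1 * g₂ y.2 - g₁ y.1 * m₂ y.2 - m₂ y.1 * g₁ y.2 + g₂ y.1 * m₁ y.2 := by
    funext y
    simp only [hf, hm₁, hm₂]
    ring
  have h₁₂ : Integrable (fun y : ℝ × ℝ => m₁ y.1 * g₂ y.2 - g₁ y.1 * m₂ y.2) := h₁.sub h₂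
  have h₁₂₃ : Integrable
      (fun y : ℝ × ℝ => m₁ y.1 * g₂ y.2 - g₁ y.1 * m₂ y.2 - m₂ y.1 * g₁ y.2) := h₁₂.sub h₃
  have hfint : Integrable f := by
    rw [hfeq]; exact h₁₂₃.add h₄
  have Ifull : ∫ y : ℝ × ℝ, f y = 2 * (x₁ - x₂) := by
    rw [hfeq, integral_add h₁₂₃ h₄, integral_sub h₁₂ h₃,
      integral_sub h₁ h₂, i₁, i₂, i₃, i₄, hm₁, hm₂, hg₁, hg₂,
      integral_id_mul_gauss x₁ v hv, integral_id_mul_gauss x₂ v hv,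
      integral_gaussianPDFReal_eq_one x₁ hv, integral_gaussianPDFReal_eq_one x₂ hv]
    ring
  set S : Set (ℝ × ℝ) := {q : ℝ × ℝ | q.2 < q.1} with hSdef
  have hS : MeasurableSet S := measurableSet_lt measurable_snd measurable_fst
  set S' : Set (ℝ × ℝ) := {q : ℝ × ℝ | q.1 < q.2} with hS'def
  have hswap : ∫ y in S', f y = ∫ y in S, f y := by
    have hmp : MeasurePreserving (Prod.swap) (volume : Measure (ℝ × ℝ)) volume := by
      rw [Measure.volume_eq_prod]; exact Measure.measurePreserving_swap
    have h := hmp.setIntegral_preimage_emb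
      (MeasurableEquiv.prodComm : ℝ × ℝ ≃ᵐ ℝ × ℝ).measurableEmbedding f S
    have hpre : Prod.swap ⁻¹' S = S' := rfl
    rw [hpre] at h
    rw [← h]
    refine setIntegral_congr_fun (measurableSet_lt measurable_fst measurable_snd) ?_
    intro x _
    simp only [hf, Prod.swap, Prod.fst_swap, Prod.snd_swap]
    ring
  have hdiag : (volume : Measure (ℝ × ℝ)) {q : ℝ × ℝ | q.1 = q.2} = 0 := by
    rw [Measure.volume_eq_prod,
      Measure.measure_prod_null (measurableSet_eq_fun measurable_fst measurable_snd)]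
    filter_upwards with x
    have hpre : (Prod.mk x ⁻¹' {q : ℝ × ℝ | q.1 = q.2}) = {x} := by
      ext y; simp [eq_comm]
    simp [hpre]
  have hae : (Sᶜ : Set (ℝ × ℝ)) =ᵐ[volume] (S' : Set (ℝ × ℝ)) := by
    rw [MeasureTheory.ae_eq_set]
    constructor
    · refine measure_mono_null ?_ hdiag
      rintro q ⟨hq1, hq2⟩
      have e1 : q.1 ≤ q.2 := not_lt.mp hq1
      have e2 : q.2 ≤ q.1 := not_lt.mp hq2
      exact le_antisymm e1 e2
    · refine measure_mono_null ?_ hdiag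
      rintro q ⟨hq1, hq2⟩
      have e2 : q.2 < q.1 := not_not.mp hq2
      exact absurd e2 (lt_asymm hq1)
  have hsplit := integral_add_compl hS hfint
  have h2 : ∫ y in Sᶜ, f y = ∫ y in S, f y := by
    rw [setIntegral_congr_set hae, hswap]
  rw [h2, Ifull] at hsplit
  have : ∫ y in S, f y = x₁ - x₂ := by linarith
  exact this
end

section
/- Let p_t(x) = (2πt)^{−1/2} exp(−x²/(2t)) and fix a > 0. Then for every t ∈ (0,1), ∫₀^∞ (x/(a t)) · (p_t(x)/p₁(a)) · ( p_{1−t}(x − a) − p_{1−t}(x + a) ) dx = 1. -/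
open MeasureTheory

lemma heatKernel_pos {s : ℝ} (hs : 0 < s) (x : ℝ) : 0 < heatKernel s x := by
  have h2 : 0 < 2 * Real.pi * s := by positivity
  exact mul_pos (inv_pos.2 (Real.sqrt_pos.2 h2)) (Real.exp_pos _)

lemma heatKernel_eq {s : ℝ} (hs : 0 < s) (x : ℝ) :
    heatKernel s x = (Real.sqrt (2 * Real.pi * s))⁻¹ * Real.exp (-(2 * s)⁻¹ * x ^ 2) := by
  rw [heatKernel]
  congr 1
  congr 1
  field_simp

lemma integrable_heatKernel {s : ℝ} (hs : 0 < s) :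
    Integrable (fun x : ℝ => heatKernel s x) := by
  have hb : (0 : ℝ) < (2 * s)⁻¹ := by positivity
  have := (integrable_exp_neg_mul_sq hb).const_mul (Real.sqrt (2 * Real.pi * s))⁻¹
  exact this.congr (by filter_upwards with x using by rw [heatKernel_eq hs])

lemma integrable_mul_heatKernel {s : ℝ} (hs : 0 < s) :
    Integrable (fun x : ℝ => x * heatKernel s x) := by
  have hb : (0 : ℝ) < (2 * s)⁻¹ := by positivity
  have := (integrable_mul_exp_neg_mul_sq hb).const_mul (Real.sqrt (2 * Real.pi * s))⁻¹
  exact this.congr (by filter_upwards with x using by rw [heatKernel_eq hs]; ring)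

lemma integrable_mul_heatKernel_sub {s : ℝ} (hs : 0 < s) (c : ℝ) :
    Integrable (fun x : ℝ => x * heatKernel s (x - c)) := by
  have h1 : Integrable (fun x : ℝ => (x + c) * heatKernel s x) := by
    have := (integrable_mul_heatKernel hs).add ((integrable_heatKernel hs).const_mul c)
    exact this.congr (by filter_upwards with x using by simp only [Pi.add_apply]; ring)
  have h2 := h1.comp_sub_right c
  exact h2.congr (by filter_upwards with x using by simp)

lemma integral_heatKernel {s : ℝ} (hs : 0 < s) :
    ∫ x : ℝ, heatKernel s x = 1 := by
  have hb : (0 : ℝ) < (2 * s)⁻¹ := by positivity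
  have h2 : 0 < 2 * Real.pi * s := by positivity
  simp_rw [heatKernel_eq hs]
  rw [integral_const_mul, integral_gaussian]
  have : Real.pi / (2 * s)⁻¹ = 2 * Real.pi * s := by field_simp
  rw [this, inv_mul_cancel₀ (ne_of_gt (Real.sqrt_pos.2 h2))]

lemma integral_mul_heatKernel {s : ℝ} (hs : 0 < s) :
    ∫ x : ℝ, x * heatKernel s x = 0 := by
  have h := integral_neg_eq_self (fun x : ℝ => x * heatKernel s x) volume
  have h2 : ∀ x : ℝ, (-x) * heatKernel s (-x) = -(x * heatKernel s x) := by
    intro x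
    have : heatKernel s (-x) = heatKernel s x := by rw [heatKernel, heatKernel, neg_pow]; ring_nf
    rw [this]; ring
  simp_rw [h2, integral_neg] at h
  linarith

lemma integral_mul_heatKernel_sub {s : ℝ} (hs : 0 < s) (c : ℝ) :
    ∫ x : ℝ, x * heatKernel s (x - c) = c := by
  have h := integral_add_right_eq_self (μ := volume) (fun x : ℝ => x * heatKernel s (x - c)) c
  rw [← h]
  simp only [add_sub_cancel_right]
  have hsplit : ∀ x : ℝ, (x + c) * heatKernel s x
      = x * heatKernel s x + c * heatKernel s x := fun x => by ring
  simp_rw [hsplit]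
  rw [integral_add (integrable_mul_heatKernel hs) ((integrable_heatKernel hs).const_mul c),
    integral_const_mul, integral_mul_heatKernel hs, integral_heatKernel hs]
  ring

lemma heatKernel_mul {t : ℝ} (ht : t ∈ Set.Ioo (0 : ℝ) 1) (c x : ℝ) :
    heatKernel t x * heatKernel (1 - t) (x - c)
      = heatKernel 1 c * heatKernel (t * (1 - t)) (x - c * t) := by
  obtain ⟨ht0, ht1⟩ := ht
  have hs : (0 : ℝ) < 1 - t := by linarith
  have hpi := Real.pi_pos
  have h1 : t ≠ 0 := ht0.ne'
  have h2 : (1 : ℝ) - t ≠ 0 := hs.ne'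
  have hexp : Real.exp (-x ^ 2 / (2 * t)) * Real.exp (-(x - c) ^ 2 / (2 * (1 - t)))
      = Real.exp (-c ^ 2 / (2 * 1)) * Real.exp (-(x - c * t) ^ 2 / (2 * (t * (1 - t)))) := by
    rw [← Real.exp_add, ← Real.exp_add]
    congr 1
    field_simp
    ring
  have hcoef : (Real.sqrt (2 * Real.pi * t))⁻¹ * (Real.sqrt (2 * Real.pi * (1 - t)))⁻¹
      = (Real.sqrt (2 * Real.pi * 1))⁻¹ * (Real.sqrt (2 * Real.pi * (t * (1 - t))))⁻¹ := by
    rw [← mul_inv, ← mul_inv, ← Real.sqrt_mul (by positivity),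
      ← Real.sqrt_mul (by positivity)]
    congr 2
    ring
  simp only [heatKernel]
  calc (Real.sqrt (2 * Real.pi * t))⁻¹ * Real.exp (-x ^ 2 / (2 * t)) *
        ((Real.sqrt (2 * Real.pi * (1 - t)))⁻¹ * Real.exp (-(x - c) ^ 2 / (2 * (1 - t))))
      = ((Real.sqrt (2 * Real.pi * t))⁻¹ * (Real.sqrt (2 * Real.pi * (1 - t)))⁻¹) *
        (Real.exp (-x ^ 2 / (2 * t)) * Real.exp (-(x - c) ^ 2 / (2 * (1 - t)))) := by ring
    _ = ((Real.sqrt (2 * Real.pi * 1))⁻¹ * (Real.sqrt (2 * Real.pi * (t * (1 - t))))⁻¹) *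
        (Real.exp (-c ^ 2 / (2 * 1)) * Real.exp (-(x - c * t) ^ 2 / (2 * (t * (1 - t))))) := by
        rw [hexp, hcoef]
    _ = _ := by ring

lemma heatKernel_neg (s y : ℝ) : heatKernel s (-y) = heatKernel s y := by
  rw [heatKernel, heatKernel, neg_pow]
  ring_nf

theorem stmt_13 (a t : ℝ) (ha : 0 < a) (ht : t ∈ Set.Ioo (0 : ℝ) 1) :
    ∫ x in Set.Ici (0 : ℝ),
        x / (a * t) * (heatKernel t x / heatKernel 1 a)
          * (heatKernel (1 - t) (x - a) - heatKernel (1 - t) (x + a)) = 1 := by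
  obtain ⟨ht0, ht1⟩ := ht
  have hs : (0 : ℝ) < 1 - t := by linarith
  have hσ : (0 : ℝ) < t * (1 - t) := by positivity
  have hm : (0 : ℝ) < a * t := by positivity
  have hne : heatKernel 1 a ≠ 0 := (heatKernel_pos one_pos a).ne'
  set σ := t * (1 - t) with hσdef
  set m := a * t with hmdef
  have key : ∀ x : ℝ, x / (a * t) * (heatKernel t x / heatKernel 1 a)
      * (heatKernel (1 - t) (x - a) - heatKernel (1 - t) (x + a))
      = (a * t)⁻¹ * (x * heatKernel σ (x - m) - x * heatKernel σ (x + m)) := by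
    intro x
    have e1 : heatKernel t x * heatKernel (1 - t) (x - a)
        = heatKernel 1 a * heatKernel σ (x - m) := heatKernel_mul ⟨ht0, ht1⟩ a x
    have e2 : heatKernel t x * heatKernel (1 - t) (x + a)
        = heatKernel 1 a * heatKernel σ (x + m) := by
      have h := heatKernel_mul ⟨ht0, ht1⟩ (-a) x
      rw [sub_neg_eq_add, heatKernel_neg, neg_mul, sub_neg_eq_add] at h
      exact h
    calc x / (a * t) * (heatKernel t x / heatKernel 1 a)
          * (heatKernel (1 - t) (x - a) - heatKernel (1 - t) (x + a))
        = x / (a * t) * (heatKernel 1 a)⁻¹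
          * (heatKernel t x * heatKernel (1 - t) (x - a)
            - heatKernel t x * heatKernel (1 - t) (x + a)) := by ring
      _ = x / (a * t) * (heatKernel 1 a)⁻¹
          * (heatKernel 1 a * heatKernel σ (x - m)
            - heatKernel 1 a * heatKernel σ (x + m)) := by rw [e1, e2]
      _ = (a * t)⁻¹ * (x * heatKernel σ (x - m) - x * heatKernel σ (x + m)) := by
          field_simp
  simp_rw [hmdef, key]
  set f : ℝ → ℝ := fun x => (a * t)⁻¹ * (x * heatKernel σ (x - m) - x * heatKernel σ (x + m))
    with hf
  have heven : ∀ x : ℝ, f |x| = f x := by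
    intro x
    rcases abs_choice x with h | h
    · rw [h]
    · rw [h, hf]
      have e1 : heatKernel σ (-x - m) = heatKernel σ (x + m) := by
        rw [show -x - m = -(x + m) by ring, heatKernel_neg]
      have e2 : heatKernel σ (-x + m) = heatKernel σ (x - m) := by
        rw [show -x + m = -(x - m) by ring, heatKernel_neg]
      simp only
      rw [e1, e2]
      ring
  have habs : ∫ x : ℝ, f x = 2 * ∫ x in Set.Ioi (0 : ℝ), f x := by
    rw [← integral_comp_abs (f := f)]
    simp_rw [heven]
  have hfull : ∫ x : ℝ, f x = 2 := by
    rw [hf]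
    simp only
    rw [integral_const_mul]
    have hsplit : ∫ x : ℝ, (x * heatKernel σ (x - m) - x * heatKernel σ (x + m))
        = (∫ x : ℝ, x * heatKernel σ (x - m)) - ∫ x : ℝ, x * heatKernel σ (x + m) := by
      have h2 : Integrable (fun x : ℝ => x * heatKernel σ (x + m)) := by
        have := integrable_mul_heatKernel_sub hσ (-m)
        simpa [sub_neg_eq_add] using this
      exact integral_sub (integrable_mul_heatKernel_sub hσ m) h2
    rw [hsplit, integral_mul_heatKernel_sub hσ m]
    have : ∫ x : ℝ, x * heatKernel σ (x + m) = -m := by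
      have := integral_mul_heatKernel_sub hσ (-m)
      simpa [sub_neg_eq_add] using this
    rw [this]
    field_simp
    ring
  rw [MeasureTheory.integral_Ici_eq_integral_Ioi]
  have : ∫ x in Set.Ioi (0 : ℝ), f x = 2⁻¹ * ∫ x : ℝ, f x := by
    rw [habs]; ring
  rw [this, hfull]
  norm_num
end
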